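/- Let C = {ρ(I_0),...,ρ(I_q)} be a chain of poset ideals I_0 ⊆ I_1 ⊆ ... ⊆ I_q of a finite poset P such that each I_j \ I_i (i < j) is connected in P. Then the face F of O(P) obtained by intersecting O(P) with: the hyperplanes x_i = x_j for all p_i, p_j ∈ I_k \ I_{k-1} (1 ≤ k ≤ q), the hyperplanes x_i = 1 for p_i ∈ I_0, and the hyperplanes x_i = 0 for p_i ∉ I_q, satisfies F = conv(C). -/
import Mathlib


open Set

variable {α : Type*} [Fintype α] [PartialOrder α]

/-- A poset ideal (down-set) of a poset. -/
def IsPosetIdeal (I : Set α) : Prop := ∀ ⦃a b : α⦄, a ≤ b → b ∈ I → a ∈ I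

/-- The indicator vector of a subset. -/
noncomputable def rho (I : Set α) : α → ℝ := I.indicator 1

/-- The order polytope of a finite poset. -/
noncomputable def orderPolytope (α : Type*) [Fintype α] [PartialOrder α] : Set (α → ℝ) :=
  convexHull ℝ {x | ∃ I : Set α, IsPosetIdeal I ∧ x = rho I}

/-- A subset of a poset is connected if the induced subgraph of the Hasse diagram is connected. -/
def ConnectedIn (S : Set α) : Prop := ((SimpleGraph.hasse α).induce S).Connected

/-- `conv {v, w}` is an edge (1-dimensional face) of the polytope `P`. -/
def IsEdgeOf (P : Set (α → ℝ)) (v w : α → ℝ) : Prop :=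
  v ≠ w ∧ IsExtreme ℝ P (segment ℝ v w)

lemma exists_cross_edge {S T : Set α} (hS : ConnectedIn S) {a b : α}
    (ha : a ∈ S) (hb : b ∈ S) (hbT : b ∈ T) (haT : a ∉ T) :
    ∃ p r : α, p ∈ S ∧ r ∈ S ∧ p ∈ T ∧ r ∉ T ∧ (SimpleGraph.hasse α).Adj p r := by
  obtain ⟨w⟩ := hS.preconnected ⟨b, hb⟩ ⟨a, ha⟩
  obtain ⟨d, _, hd1, hd2⟩ := w.exists_boundary_dart (Subtype.val ⁻¹' T) hbT haT
  exact ⟨d.fst.val, d.snd.val, d.fst.2, d.snd.2, hd1, hd2, d.adj⟩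

lemma mem_orderPolytope_props {x : α → ℝ} (hx : x ∈ orderPolytope α) :
    (∀ a, 0 ≤ x a) ∧ (∀ a, x a ≤ 1) ∧ (∀ a b : α, a ≤ b → x b ≤ x a) := by
  have hsub : orderPolytope α ⊆
      {y : α → ℝ | (∀ a, 0 ≤ y a) ∧ (∀ a, y a ≤ 1) ∧ ∀ a b : α, a ≤ b → y b ≤ y a} := by
    apply convexHull_min
    · rintro y ⟨J, hJ, rfl⟩
      refine ⟨fun a => ?_, fun a => ?_, fun a b hab => ?_⟩
      · exact Set.indicator_nonneg (fun _ _ => zero_le_one) a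
      · by_cases h : a ∈ J
        · simp [rho, Set.indicator_of_mem h]
        · simp [rho, Set.indicator_of_notMem h]
      · by_cases h : b ∈ J
        · have h' : a ∈ J := hJ hab h
          simp [rho, Set.indicator_of_mem h, Set.indicator_of_mem h']
        · simp only [rho, Set.indicator_of_notMem h]
          exact Set.indicator_nonneg (fun _ _ => zero_le_one) a
    · rintro y ⟨hy0, hy1, hym⟩ z ⟨hz0, hz1, hzm⟩ s t hs ht hst
      refine ⟨fun a => ?_, fun a => ?_, fun a b hab => ?_⟩ <;>
        simp only [Pi.add_apply, Pi.smul_apply, smul_eq_mul]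
      · have := hy0 a; have := hz0 a; nlinarith
      · have := hy1 a; have := hz1 a; nlinarith
      · have := hym a b hab; have := hzm a b hab; nlinarith
  exact hsub hx

noncomputable def chainJ (q : ℕ) (I : Fin (q+1) → Set α) (n : ℕ) : Set α :=
  I ⟨min n q, Nat.lt_succ_of_le (min_le_right n q)⟩

lemma chainJ_eq (q : ℕ) (I : Fin (q+1) → Set α) {n : ℕ} (hn : n ≤ q) (h : n < q + 1) :
    chainJ q I n = I ⟨n, h⟩ := by
  have e : (⟨min n q, Nat.lt_succ_of_le (min_le_right n q)⟩ : Fin (q+1)) = ⟨n, h⟩ :=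
    Fin.ext (show min n q = n by omega)
  unfold chainJ; rw [e]

lemma chainJ_mono (q : ℕ) (I : Fin (q+1) → Set α) (hchain : ∀ i j, i ≤ j → I i ⊆ I j)
    {m n : ℕ} (h : m ≤ n) : chainJ q I m ⊆ chainJ q I n :=
  hchain _ _ (by simp only [Fin.mk_le_mk]; omega)

lemma chainJ_stab (q : ℕ) (I : Fin (q+1) → Set α) {m n : ℕ} (hm : q ≤ m) (hn : q ≤ n) :
    chainJ q I m = chainJ q I n := by
  have e : (⟨min m q, Nat.lt_succ_of_le (min_le_right m q)⟩ : Fin (q+1)) =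
      ⟨min n q, Nat.lt_succ_of_le (min_le_right n q)⟩ := Fin.ext (show min m q = min n q by omega)
  unfold chainJ; rw [e]

open scoped Classical in
noncomputable def useq (q : ℕ) (I : Fin (q+1) → Set α) (x : α → ℝ) : ℕ → ℝ
  | 0 => 1
  | n+1 => if h : (chainJ q I (n+1) \ chainJ q I n).Nonempty then x h.choose else useq q I x n

lemma useq_zero (q : ℕ) (I : Fin (q+1) → Set α) (x : α → ℝ) : useq q I x 0 = 1 := rfl

open scoped Classical in
lemma useq_succ (q : ℕ) (I : Fin (q+1) → Set α) (x : α → ℝ) (n : ℕ) :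
    useq q I x (n+1) = if h : (chainJ q I (n+1) \ chainJ q I n).Nonempty then x h.choose
      else useq q I x n := rfl

theorem face_eq_convexHull_chain (q : ℕ) (I : Fin (q + 1) → Set α)
    (hI : ∀ k, IsPosetIdeal (I k))
    (hchain : ∀ i j, i ≤ j → I i ⊆ I j)
    (hconn : ∀ i j, i < j → ConnectedIn (I j \ I i)) :
    orderPolytope α ∩
        {x | (∀ k : Fin q, ∀ a ∈ I k.succ \ I k.castSucc, ∀ b ∈ I k.succ \ I k.castSucc,
                x a = x b) ∧
             (∀ a ∈ I 0, x a = 1) ∧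
             (∀ a, a ∉ I (Fin.last q) → x a = 0)} =
      convexHull ℝ (Set.range fun k => rho (I k)) := by
  classical
  apply Set.Subset.antisymm
  · rintro x ⟨hxO, hxc, hx1, hx0⟩
    obtain ⟨hx0', hx1', hxm⟩ := mem_orderPolytope_props hxO
    have hJmono : ∀ {m n : ℕ}, m ≤ n → chainJ q I m ⊆ chainJ q I n :=
      fun h => chainJ_mono q I hchain h
    have hJideal : ∀ n, IsPosetIdeal (chainJ q I n) := fun n => hI _
    have hlastJ : chainJ q I q = I (Fin.last q) := chainJ_eq q I le_rfl (Nat.lt_succ_self q)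
    have hJ0 : chainJ q I 0 = I 0 := by
      rw [chainJ_eq q I (Nat.zero_le q) (by omega)]
      congr 1
    have hblock_le : ∀ {m : ℕ}, (chainJ q I (m+1) \ chainJ q I m).Nonempty → m < q := by
      intro m hne
      by_contra h
      push_neg at h
      rw [chainJ_stab q I (by omega) (h : q ≤ m)] at hne
      simp at hne
    have hconst : ∀ (m : ℕ), ∀ a ∈ chainJ q I (m+1) \ chainJ q I m,
        ∀ b ∈ chainJ q I (m+1) \ chainJ q I m, x a = x b := by
      intro m a ha b hb
      have hm : m < q := hblock_le ⟨a, ha⟩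
      have e1 : chainJ q I (m+1) = I ((⟨m, hm⟩ : Fin q).succ) := by
        rw [chainJ_eq q I (by omega) (by omega)]; congr 1
      have e2 : chainJ q I m = I ((⟨m, hm⟩ : Fin q).castSucc) := by
        rw [chainJ_eq q I (by omega) (by omega)]; congr 1
      exact hxc ⟨m, hm⟩ a (by rw [← e1, ← e2]; exact ha) b (by rw [← e1, ← e2]; exact hb)
    have huval : ∀ (m : ℕ) (a : α), a ∈ chainJ q I (m+1) \ chainJ q I m →
        useq q I x (m+1) = x a := by
      intro m a ha
      have hne : (chainJ q I (m+1) \ chainJ q I m).Nonempty := ⟨a, ha⟩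
      rw [useq_succ, dif_pos hne]
      exact hconst m _ hne.choose_spec a ha
    have hu0 : ∀ n, 0 ≤ useq q I x n := by
      intro n
      induction n with
      | zero => rw [useq_zero]; norm_num
      | succ n ih =>
        rw [useq_succ]
        split
        · exact hx0' _
        · exact ih
    have hstall_u : ∀ n, (chainJ q I (n+1) \ chainJ q I n) = ∅ →
        useq q I x (n+1) = useq q I x n := by
      intro n h
      rw [useq_succ, dif_neg (by rw [h]; exact Set.not_nonempty_empty)]
    have hstall_J : ∀ n, (chainJ q I (n+1) \ chainJ q I n) = ∅ →
        chainJ q I (n+1) = chainJ q I n := fun n h =>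
      Set.Subset.antisymm (by rwa [Set.diff_eq_empty] at h) (hJmono (Nat.le_succ n))
    have hstep : ∀ n, useq q I x (n+1) ≤ useq q I x n := by
      intro n
      by_cases hne : (chainJ q I (n+1) \ chainJ q I n).Nonempty
      · obtain ⟨b, hb⟩ := hne
        have hnq : n < q := hblock_le ⟨b, hb⟩
        have hub : useq q I x (n+1) = x b := huval n b hb
        set P : ℕ → Prop := fun i => (chainJ q I i \ chainJ q I (i-1)).Nonempty with hP
        set j := Nat.findGreatest P n with hj
        have hjn : j ≤ n := Nat.findGreatest_le n
        have hstall : ∀ i, j < i → i ≤ n → (chainJ q I i \ chainJ q I (i-1)) = ∅ :=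
          fun i h1 h2 => Set.not_nonempty_iff_eq_empty.mp (Nat.findGreatest_is_greatest h1 h2)
        have hJeq : ∀ d, j + d ≤ n → chainJ q I (j + d) = chainJ q I j := by
          intro d
          induction d with
          | zero => intro _; rfl
          | succ d ih =>
            intro hd
            have h0 := hstall (j+d+1) (by omega) (by omega)
            simp only [Nat.add_sub_cancel] at h0
            rw [show j + (d+1) = (j+d)+1 from rfl, hstall_J _ h0, ih (by omega)]
        have hueq : ∀ d, j + d ≤ n → useq q I x (j + d) = useq q I x j := by
          intro d
          induction d with
          | zero => intro _; rfl
          | succ d ih =>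
            intro hd
            have h0 := hstall (j+d+1) (by omega) (by omega)
            simp only [Nat.add_sub_cancel] at h0
            rw [show j + (d+1) = (j+d)+1 from rfl, hstall_u _ h0, ih (by omega)]
        have hJnj : chainJ q I n = chainJ q I j := by
          have := hJeq (n - j) (by omega)
          rwa [Nat.add_sub_cancel' hjn] at this
        have hunj : useq q I x n = useq q I x j := by
          have := hueq (n - j) (by omega)
          rwa [Nat.add_sub_cancel' hjn] at this
        rcases Nat.eq_zero_or_pos j with hj0 | hj0
        · have h1 : useq q I x n = 1 := by rw [hunj, hj0, useq_zero]
          rw [hub, h1]; exact hx1' b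
        · have hPj : P j := Nat.findGreatest_of_ne_zero hj.symm (by omega)
          obtain ⟨a, ha⟩ := hPj
          have ej : j - 1 + 1 = j := Nat.succ_pred_eq_of_pos hj0
          have hua : useq q I x j = x a := by
            have := huval (j-1) a (by rw [ej]; exact ha)
            rwa [ej] at this
          have hc := hconn ⟨j-1, by omega⟩ ⟨n+1, by omega⟩ (by simp [Fin.mk_lt_mk]; omega)
          have eS : I (⟨n+1, by omega⟩ : Fin (q+1)) \ I ⟨j-1, by omega⟩ =
              chainJ q I (n+1) \ chainJ q I (j-1) := by
            rw [chainJ_eq q I (by omega) (by omega), chainJ_eq q I (by omega) (by omega)]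
          rw [eS] at hc
          have hbS : b ∈ chainJ q I (n+1) \ chainJ q I (j-1) :=
            ⟨hb.1, fun h => hb.2 (hJmono (by omega) h)⟩
          have haS : a ∈ chainJ q I (n+1) \ chainJ q I (j-1) :=
            ⟨hJmono (by omega) ha.1, ha.2⟩
          obtain ⟨p, r, hpS, hrS, hpT, hrT, hadj⟩ :=
            exists_cross_edge (T := (chainJ q I n)ᶜ) hc haS hbS hb.2
              (by simp only [Set.mem_compl_iff, not_not]; rw [hJnj]; exact ha.1)
          have hrn : r ∈ chainJ q I n := by simpa using hrT
          have hpn : p ∉ chainJ q I n := hpT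
          have hrp : r ≤ p := by
            rcases SimpleGraph.hasse_adj.mp hadj with h | h
            · exact absurd (hJideal n h.le hrn) hpn
            · exact h.le
          have hpB : p ∈ chainJ q I (n+1) \ chainJ q I n := ⟨hpS.1, hpn⟩
          have hrB : r ∈ chainJ q I (j-1+1) \ chainJ q I (j-1) := by
            rw [ej]; exact ⟨hJnj ▸ hrn, hrS.2⟩
          have haB : a ∈ chainJ q I (j-1+1) \ chainJ q I (j-1) := by rw [ej]; exact ha
          calc useq q I x (n+1) = x b := hub
            _ = x p := hconst n b hb p hpB
            _ ≤ x r := hxm r p hrp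
            _ = x a := hconst (j-1) r hrB a haB
            _ = useq q I x j := hua.symm
            _ = useq q I x n := hunj.symm
      · rw [hstall_u n (Set.not_nonempty_iff_eq_empty.mp hne)]
    have hanti : Antitone (useq q I x) := antitone_nat_of_succ_le hstep
    set v : ℕ → ℝ := fun n => if n ≤ q then useq q I x n else 0 with hv
    have hv0 : v 0 = 1 := by rw [hv]; simp [useq_zero]
    have hvq1 : v (q+1) = 0 := by rw [hv]; simp
    have hw_nonneg : ∀ k : Fin (q+1), 0 ≤ v k.val - v (k.val+1) := by
      intro k
      have hk : k.val ≤ q := by omega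
      rw [hv]
      by_cases h : k.val + 1 ≤ q
      · simp only [if_pos hk, if_pos h]
        linarith [hstep k.val]
      · simp only [if_pos hk, if_neg h]
        simpa using hu0 k.val
    have hsum : ∑ k : Fin (q+1), (v k.val - v (k.val+1)) = 1 := by
      rw [Fin.sum_univ_eq_sum_range (fun n => v n - v (n+1)), Finset.sum_range_sub' v,
        hv0, hvq1]
      ring
    have hxsum : x = ∑ k : Fin (q+1), (v k.val - v (k.val+1)) • rho (I k) := by
      funext a
      rw [Finset.sum_apply]
      simp only [Pi.smul_apply, smul_eq_mul]
      have hIrho : ∀ k : Fin (q+1), I k = chainJ q I k.val := by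
        intro k
        rw [chainJ_eq q I (by omega) k.isLt]
      by_cases haq : a ∈ chainJ q I q
      · have hex : ∃ n, a ∈ chainJ q I n := ⟨q, haq⟩
        set m := Nat.find hex with hmdef
        have hm : a ∈ chainJ q I m := Nat.find_spec hex
        have hmq : m ≤ q := Nat.find_min' hex haq
        set g : ℕ → ℝ := fun k => if m ≤ k then v k else v m with hg
        have hterm : ∀ k : Fin (q+1), (v k.val - v (k.val+1)) * rho (I k) a
            = g k.val - g (k.val+1) := by
          intro k
          rw [hIrho k]
          by_cases h : m ≤ k.val
          · have hmem : a ∈ chainJ q I k.val := hJmono h hm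
            rw [rho, Set.indicator_of_mem hmem, hg]
            simp only [if_pos h, if_pos (by omega : m ≤ k.val + 1), Pi.one_apply]
            try ring
          · have hnmem : a ∉ chainJ q I k.val := Nat.find_min hex (by omega)
            rw [rho, Set.indicator_of_notMem hnmem, hg]
            by_cases h2 : m ≤ k.val + 1
            · have hm1 : m = k.val + 1 := by omega
              simp only [if_neg h, if_pos h2]
              rw [hm1]
              ring
            · simp only [if_neg h, if_neg h2]
              ring
        rw [Finset.sum_congr rfl (fun k _ => hterm k),
          Fin.sum_univ_eq_sum_range (fun n => g n - g (n+1)), Finset.sum_range_sub' g]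
        have hg0 : g 0 = v m := by
          rw [hg]
          by_cases h : m ≤ 0
          · simp only [if_pos h]
            congr 1
            omega
          · simp only [if_neg h]
        have hgq1 : g (q+1) = 0 := by
          rw [hg]
          simp only [if_pos (by omega : m ≤ q + 1), hvq1]
        rw [hg0, hgq1, sub_zero]
        have hvm : v m = useq q I x m := by rw [hv]; simp [hmq]
        rw [hvm]
        rcases Nat.eq_zero_or_pos m with h0 | h0
        · rw [h0, useq_zero]
          apply hx1
          rw [← hJ0, ← h0]
          exact hm
        · have em : m - 1 + 1 = m := by omega
          have hmB : a ∈ chainJ q I (m-1+1) \ chainJ q I (m-1) := by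
            rw [em]
            exact ⟨hm, Nat.find_min hex (by omega)⟩
          have := huval (m-1) a hmB
          rw [em] at this
          rw [this]
      · have h0 : ∀ k : Fin (q+1), rho (I k) a = 0 := by
          intro k
          have : a ∉ I k := by
            rw [hIrho k]
            exact fun h => haq (hJmono (by omega) h)
          exact Set.indicator_of_notMem this _
        have : x a = 0 := hx0 a (by rwa [← hlastJ])
        rw [this]
        symm
        apply Finset.sum_eq_zero
        intro k _
        rw [h0 k]
        ring
    rw [hxsum]
    exact (convex_convexHull ℝ _).sum_mem (fun k _ => hw_nonneg k) hsum
      (fun k _ => subset_convexHull ℝ _ ⟨k, rfl⟩)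
  · apply convexHull_min
    · rintro _ ⟨k, rfl⟩
      refine ⟨subset_convexHull ℝ _ ⟨I k, hI k, rfl⟩, ?_, ?_, ?_⟩
      · intro k' a ha b hb
        rcases le_or_gt k'.succ k with h | h
        · have ha' : a ∈ I k := hchain _ _ h ha.1
          have hb' : b ∈ I k := hchain _ _ h hb.1
          simp only [rho, Set.indicator_of_mem ha', Set.indicator_of_mem hb', Pi.one_apply]
        · have hk : k ≤ k'.castSucc := by
            rw [Fin.le_def]
            rw [Fin.lt_def] at h
            simp only [Fin.val_succ] at h
            simp only [Fin.coe_castSucc]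
            omega
          have ha' : a ∉ I k := fun hmem => ha.2 (hchain _ _ hk hmem)
          have hb' : b ∉ I k := fun hmem => hb.2 (hchain _ _ hk hmem)
          simp only [rho, Set.indicator_of_notMem ha', Set.indicator_of_notMem hb']
      · intro a ha
        have : a ∈ I k := hchain 0 k (Fin.zero_le k) ha
        simp only [rho, Set.indicator_of_mem this, Pi.one_apply]
      · intro a ha
        have : a ∉ I k := fun hmem => ha (hchain k (Fin.last q) (Fin.le_last k) hmem)
        simp only [rho, Set.indicator_of_notMem this]
    · apply Convex.inter (convex_convexHull ℝ _)
      rintro y ⟨hy1, hy2, hy3⟩ z ⟨hz1, hz2, hz3⟩ s t hs ht hst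
      refine ⟨fun k a ha b hb => ?_, fun a ha => ?_, fun a ha => ?_⟩ <;>
        simp only [Pi.add_apply, Pi.smul_apply, smul_eq_mul]
      · rw [hy1 k a ha b hb, hz1 k a ha b hb]
      · rw [hy2 a ha, hz2 a ha]
        linarith
      · rw [hy3 a ha, hz3 a ha]
        ring
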